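/- Let s ∈ {−1, 1}, l > 0, κ > 0. Let ρ, M : (0,∞) → ℝ and suppose M is differentiable on (0,∞) with M′(r) = 2π²r³ρ(r) for all r > 0. For r > 0 set W(r) = r⁴/l⁴ + s·κ·M(r)/(6π²l²) and assume W(r) > 0, and define u(r) = 1 + s·r²/l² − s·√W(r). Then u is differentiable at every r > 0 and satisfies −u′(r)/(2r) + (1 − u(r))/r² − s·l²·u′(r)·(1 − u(r))/(2r³) = κ·ρ(r)/12. -/

import Mathlib

open Real

/-- Interior field equation (36′) of Einstein–Chern–Simons gravity for the
metric function `u(r) = e^{−2g(r)}` given by the solution (42′). -/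
theorem stmt_0 (s l κ : ℝ) (hs : s = 1 ∨ s = -1) (hl : 0 < l) (hκ : 0 < κ)
    (ρ M W u : ℝ → ℝ)
    (hM : ∀ r > (0 : ℝ), HasDerivAt M (2 * π ^ 2 * r ^ 3 * ρ r) r)
    (hW : ∀ r : ℝ, W r = r ^ 4 / l ^ 4 + s * κ * M r / (6 * π ^ 2 * l ^ 2))
    (hWpos : ∀ r > (0 : ℝ), 0 < W r)
    (hu : ∀ r : ℝ, u r = 1 + s * r ^ 2 / l ^ 2 - s * Real.sqrt (W r)) :
    ∀ r > (0 : ℝ), DifferentiableAt ℝ u r ∧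
      -(deriv u r) / (2 * r) + (1 - u r) / r ^ 2
        - s * l ^ 2 * (deriv u r) * (1 - u r) / (2 * r ^ 3) = κ * ρ r / 12 := by
  intro r hr
  have hπ : (π : ℝ) ≠ 0 := Real.pi_ne_zero
  have hl' : (l : ℝ) ≠ 0 := ne_of_gt hl
  have hWr : 0 < W r := hWpos r hr
  set q := Real.sqrt (W r) with hqdef
  have hq : 0 < q := Real.sqrt_pos.mpr hWr
  have hq2 : q ^ 2 = W r := Real.sq_sqrt hWr.le
  -- derivative of W
  have hWd : HasDerivAt W
      (4 * r ^ 3 / l ^ 4 + s * κ * (2 * π ^ 2 * r ^ 3 * ρ r) / (6 * π ^ 2 * l ^ 2)) r := by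
    have h1 : HasDerivAt (fun x : ℝ => x ^ 4 / l ^ 4 + s * κ * M x / (6 * π ^ 2 * l ^ 2))
        (4 * r ^ 3 / l ^ 4 + s * κ * (2 * π ^ 2 * r ^ 3 * ρ r) / (6 * π ^ 2 * l ^ 2)) r := by
      have h2 : HasDerivAt (fun x : ℝ => x ^ 4) (4 * r ^ 3) r := by
        simpa using hasDerivAt_pow 4 r
      exact (h2.div_const _).add (((hM r hr).const_mul (s * κ)).div_const _)
    exact h1.congr_of_eventuallyEq (Filter.Eventually.of_forall fun x => hW x)
  -- derivative of sqrt ∘ W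
  have hqd : HasDerivAt (fun x => Real.sqrt (W x))
      ((4 * r ^ 3 / l ^ 4 + s * κ * (2 * π ^ 2 * r ^ 3 * ρ r) / (6 * π ^ 2 * l ^ 2)) / (2 * q)) r :=
    hWd.sqrt (ne_of_gt hWr)
  -- derivative of u
  set W' := 4 * r ^ 3 / l ^ 4 + s * κ * (2 * π ^ 2 * r ^ 3 * ρ r) / (6 * π ^ 2 * l ^ 2) with hW'def
  have hud : HasDerivAt u (2 * s * r / l ^ 2 - s * (W' / (2 * q))) r := by
    have h1 : HasDerivAt (fun x : ℝ => 1 + s * x ^ 2 / l ^ 2 - s * Real.sqrt (W x))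
        (2 * s * r / l ^ 2 - s * (W' / (2 * q))) r := by
      have h2 : HasDerivAt (fun x : ℝ => 1 + s * x ^ 2 / l ^ 2) (2 * s * r / l ^ 2) r := by
        have h3 : HasDerivAt (fun x : ℝ => x ^ 2) (2 * r) r := by
          simpa using hasDerivAt_pow 2 r
        have := ((h3.const_mul s).div_const (l ^ 2)).const_add 1
        rw [show 2 * s * r / l ^ 2 = s * (2 * r) / l ^ 2 by ring]
        exact this
      exact h2.sub (hqd.const_mul s)
    exact h1.congr_of_eventuallyEq (Filter.Eventually.of_forall fun x => hu x)
  refine ⟨hud.differentiableAt, ?_⟩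
  rw [hud.deriv, hu r, ← hqdef]
  have hr' : r ≠ 0 := ne_of_gt hr
  have hq' : q ≠ 0 := ne_of_gt hq
  rcases hs with h | h <;> subst h <;> rw [hW'def] <;> field_simp <;> ring
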